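/- Let d ≥ 1 and n ≥ 1 be integers, p, T, ε > 0, ξ ∈ ℝ^d with |ξ| = 1, let a_0 be a Schwartz function on ℝ^d, let β : ℝ^d → ℝ be smooth, and let G(x) = Σ_{k≥1} (a_k/k!) x^k be a power series with real coefficients converging absolutely for |x| < R (R > 0). Assume ε^{2p} sup_x |a_0(x)|² < R. Define a(t,x) = a_0(x + ε^{1−2n} t ξ) · exp(−i ε^{−2n} G(ε^{2p} |a_0(x + ε^{1−2n} t ξ)|²) ∫_0^t β(ε^{−1} x + ε^{−2n}(t−s) ξ − T ξ) ds). Then a is continuously differentiable on ℝ × ℝ^d, a(0,x) = a_0(x) for all x, and a satisfies the transport equation i ∂_t a(t,x) − i ε^{1−2n} ξ · ∇_x a(t,x) − ε^{−2n} β(ε^{−1} x − T ξ) G(ε^{2p} |a(t,x)|²) a(t,x) = 0 for all (t,x) ∈ ℝ × ℝ^d. -/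

import Mathlib

open MeasureTheory

/-- The power series nonlinearity `G(x) = Σ_{k≥1} (a_k/k!) x^k`. -/
noncomputable def Gser (c : ℕ → ℝ) (x : ℝ) : ℝ :=
  ∑' k : ℕ, c (k + 1) / (k + 1).factorial * x ^ (k + 1)

/-- The explicit amplitude
`a(t,x) = a₀(x + ε^{1−2n} t ξ)
  exp(−i ε^{−2n} G(ε^{2p}|a₀(x + ε^{1−2n} t ξ)|²) ∫_0^t β(ε^{−1}x + ε^{−2n}(t−s)ξ − Tξ) ds)`. -/
noncomputable def aFun (d n : ℕ) (p T : ℝ) (ξ : EuclideanSpace ℝ (Fin d))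
    (a₀ : SchwartzMap (EuclideanSpace ℝ (Fin d)) ℂ) (β : EuclideanSpace ℝ (Fin d) → ℝ)
    (c : ℕ → ℝ) (ε t : ℝ) (x : EuclideanSpace ℝ (Fin d)) : ℂ :=
  a₀ (x + (ε ^ ((1 : ℝ) - 2 * (n : ℝ)) * t) • ξ) *
    Complex.exp (-Complex.I * Complex.ofReal (ε ^ (-(2 * (n : ℝ)))) *
      Complex.ofReal (Gser c (ε ^ (2 * p) * ‖a₀ (x + (ε ^ ((1 : ℝ) - 2 * (n : ℝ)) * t) • ξ)‖ ^ 2)) *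
      Complex.ofReal (∫ s in (0 : ℝ)..t, β (ε⁻¹ • x + (ε ^ (-(2 * (n : ℝ))) * (t - s)) • ξ - T • ξ)))

/-- The partial derivative `∂_{x_i}`. -/
noncomputable def pderiv' {d : ℕ} (i : Fin d) (u : EuclideanSpace ℝ (Fin d) → ℂ) :
    EuclideanSpace ℝ (Fin d) → ℂ :=
  fun x => fderiv ℝ u x (EuclideanSpace.single i 1)

noncomputable section

namespace Stmt3Aux

/-! ### Auxiliary facts about the phase integral -/

variable {d : ℕ} (β : EuclideanSpace ℝ (Fin d) → ℝ) (v : EuclideanSpace ℝ (Fin d))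

/-- parametric integral with normalized limits -/
def Psi : ℝ × EuclideanSpace ℝ (Fin d) → ℝ :=
  fun q => ∫ σ in (0:ℝ)..1, β (q.2 + (q.1 * σ) • v)

/-- `Phi (t, z) = ∫ u in 0..t, β (z + u • v)` in a form convenient for joint regularity. -/
def Phi : ℝ × EuclideanSpace ℝ (Fin d) → ℝ := fun q => q.1 * Psi β v q

lemma phi_eq (t : ℝ) (z : EuclideanSpace ℝ (Fin d)) :
    Phi β v (t, z) = ∫ u in (0:ℝ)..t, β (z + u • v) := by
  have h := intervalIntegral.smul_integral_comp_mul_left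
    (f := fun u : ℝ => β (z + u • v)) (a := (0:ℝ)) (b := 1) t
  simp only [smul_eq_mul, mul_one, mul_zero] at h
  exact h

variable {β v} (hβ : ContDiff ℝ (⊤ : ℕ∞) β)

section
include hβ

lemma gfull_contDiff : ContDiff ℝ (⊤ : ℕ∞)
    (fun z : (ℝ × EuclideanSpace ℝ (Fin d)) × ℝ => β (z.1.2 + (z.1.1 * z.2) • v)) := by
  apply hβ.comp
  exact (contDiff_snd.comp contDiff_fst).add
    (((contDiff_fst.comp contDiff_fst).mul contDiff_snd).smul contDiff_const)

lemma psi_contDiff : ContDiff ℝ 1 (Psi β v) := by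
  classical
  set g : (ℝ × EuclideanSpace ℝ (Fin d)) × ℝ → ℝ :=
    fun z => β (z.1.2 + (z.1.1 * z.2) • v) with hg
  have hgC : ContDiff ℝ (⊤ : ℕ∞) g := gfull_contDiff hβ
  set D : (ℝ × EuclideanSpace ℝ (Fin d)) × ℝ → (ℝ × EuclideanSpace ℝ (Fin d)) →L[ℝ] ℝ :=
    fun z => (fderiv ℝ g z).comp
      (ContinuousLinearMap.inl ℝ (ℝ × EuclideanSpace ℝ (Fin d)) ℝ) with hD
  have hDcont : Continuous D := by
    apply Continuous.clm_comp
    · exact hgC.continuous_fderiv (by simp)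
    · exact continuous_const
  have hDderiv : ∀ (x : ℝ × EuclideanSpace ℝ (Fin d)) (σ : ℝ),
      HasFDerivAt (fun q : ℝ × EuclideanSpace ℝ (Fin d) => g (q, σ)) (D (x, σ)) x := by
    intro x σ
    have h1 : HasFDerivAt g (fderiv ℝ g (x, σ)) (x, σ) :=
      ((hgC.differentiable (by simp)) (x, σ)).hasFDerivAt
    exact h1.comp x (hasFDerivAt_prodMk_left (𝕜 := ℝ) x σ)
  set K : ℝ × EuclideanSpace ℝ (Fin d) → (ℝ × EuclideanSpace ℝ (Fin d)) →L[ℝ] ℝ :=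
    fun q => ∫ σ in (0:ℝ)..1, D (q, σ) with hK
  have hΨ : ∀ q₀ : ℝ × EuclideanSpace ℝ (Fin d), HasFDerivAt (Psi β v) (K q₀) q₀ := by
    intro q₀
    obtain ⟨C, hC⟩ : ∃ C, ∀ z ∈ (Metric.closedBall q₀ 1) ×ˢ Set.Icc (0:ℝ) 1, ‖D z‖ ≤ C := by
      have hcomp : IsCompact ((Metric.closedBall q₀ 1) ×ˢ Set.Icc (0:ℝ) 1) :=
        (isCompact_closedBall q₀ 1).prod isCompact_Icc
      exact hcomp.exists_bound_of_continuousOn hDcont.continuousOn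
    have key := intervalIntegral.hasFDerivAt_integral_of_dominated_of_fderiv_le
      (𝕜 := ℝ) (μ := volume)
      (F := fun (q : ℝ × EuclideanSpace ℝ (Fin d)) (σ : ℝ) => g (q, σ))
      (F' := fun (q : ℝ × EuclideanSpace ℝ (Fin d)) (σ : ℝ) => D (q, σ)) (x₀ := q₀)
      (a := 0) (b := 1) (bound := fun _ => C) (Metric.ball_mem_nhds q₀ one_pos) ?_ ?_ ?_ ?_ ?_ ?_
    · exact key
    · filter_upwards with q
      exact (hgC.continuous.comp (Continuous.prodMk_right q)).aestronglyMeasurable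
    · exact ((hgC.continuous.comp (Continuous.prodMk_right q₀))).intervalIntegrable 0 1
    · exact (hDcont.comp (Continuous.prodMk_right q₀)).aestronglyMeasurable
    · filter_upwards with σ hσ
      intro q hq
      apply hC
      constructor
      · exact Metric.ball_subset_closedBall hq
      · rw [Set.uIoc_of_le (zero_le_one' ℝ)] at hσ
        exact Set.Ioc_subset_Icc_self hσ
    · exact intervalIntegrable_const
    · filter_upwards with σ hσ
      intro q hq
      exact hDderiv q σ
  have hKcont : Continuous K := by
    have h2 := intervalIntegral.continuous_parametric_intervalIntegral_of_continuous'
      (μ := volume)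
      (f := fun (q : ℝ × EuclideanSpace ℝ (Fin d)) (σ : ℝ) => D (q, σ)) ?_ 0 1
    · exact h2
    · have h3 : (Function.uncurry fun (q : ℝ × EuclideanSpace ℝ (Fin d)) (σ : ℝ) => D (q, σ))
          = D := by
        funext z; simp [Function.uncurry]
      rw [h3]; exact hDcont
  rw [contDiff_one_iff_fderiv]
  refine ⟨fun q => (hΨ q).differentiableAt, ?_⟩
  have h4 : fderiv ℝ (Psi β v) = K := funext fun q => (hΨ q).fderiv
  rw [h4]; exact hKcont

lemma phi_contDiff : ContDiff ℝ 1 (Phi β v) :=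
  (contDiff_fst.of_le le_top).mul (psi_contDiff hβ)

/-- FTC part: derivative in `t`. -/
lemma phi_hasDerivAt_fst (t : ℝ) (z : EuclideanSpace ℝ (Fin d)) :
    HasDerivAt (fun τ : ℝ => Phi β v (τ, z)) (β (z + t • v)) t := by
  have hfun : (fun τ : ℝ => Phi β v (τ, z)) = fun τ => ∫ u in (0:ℝ)..τ, β (z + u • v) :=
    funext fun τ => phi_eq β v τ z
  rw [hfun]
  have hcont : Continuous fun u : ℝ => β (z + u • v) :=
    hβ.continuous.comp (continuous_const.add (continuous_id.smul continuous_const))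
  exact (hcont.integral_hasStrictDerivAt 0 t).hasDerivAt

/-- directional derivative in `z` along `v`. -/
lemma phi_hasDerivAt_line (t : ℝ) (z : EuclideanSpace ℝ (Fin d)) :
    HasDerivAt (fun ρ : ℝ => Phi β v (t, z + ρ • v)) (β (z + t • v) - β z) 0 := by
  have hcont : Continuous fun u : ℝ => β (z + u • v) :=
    hβ.continuous.comp (continuous_const.add (continuous_id.smul continuous_const))
  set B : ℝ → ℝ := fun s => ∫ u in (0:ℝ)..s, β (z + u • v) with hBdef
  have hB : ∀ s : ℝ, HasDerivAt B (β (z + s • v)) s := fun s =>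
    (hcont.integral_hasStrictDerivAt 0 s).hasDerivAt
  have hsplit : ∀ ρ : ℝ, Phi β v (t, z + ρ • v) = B (t + ρ) - B ρ := by
    intro ρ
    rw [phi_eq]
    have h1 : (fun u : ℝ => β (z + ρ • v + u • v)) = fun u : ℝ => β (z + (u + ρ) • v) := by
      funext u
      congr 1
      rw [add_smul, add_assoc, add_comm (ρ • v) (u • v)]
    calc (∫ u in (0:ℝ)..t, β (z + ρ • v + u • v))
        = ∫ u in (0:ℝ)..t, β (z + (u + ρ) • v) := by rw [h1]
      _ = ∫ u in (0+ρ:ℝ)..(t+ρ), β (z + u • v) :=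
          intervalIntegral.integral_comp_add_right (fun u => β (z + u • v)) ρ
      _ = B (t + ρ) - B ρ := by
          rw [zero_add, hBdef]
          rw [eq_sub_iff_add_eq, add_comm]
          exact intervalIntegral.integral_add_adjacent_intervals
            (hcont.intervalIntegrable 0 ρ) (hcont.intervalIntegrable ρ (t+ρ))
  have hfun : (fun ρ : ℝ => Phi β v (t, z + ρ • v)) = fun ρ => B (t + ρ) - B ρ :=
    funext hsplit
  rw [hfun]
  have h1 : HasDerivAt (fun ρ : ℝ => B (t + ρ)) (β (z + t • v)) 0 := by
    have inner : HasDerivAt (fun ρ : ℝ => t + ρ) 1 0 := (hasDerivAt_id 0).const_add t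
    have outer : HasDerivAt B (β (z + (t+0) • v)) (t + 0) := hB (t+0)
    have := outer.comp 0 inner
    simp only [add_zero, mul_one] at this; exact this
  have h2 : HasDerivAt (fun ρ : ℝ => B ρ) (β (z + (0:ℝ) • v)) 0 := hB 0
  have := h1.sub h2
  simp only [zero_smul, add_zero] at this; exact this

end

/-! ### Auxiliary facts about the power series -/

variable (c : ℕ → ℝ) {R : ℝ}

def bcoef : ℕ → ℝ := fun k => if k = 0 then 0 else c k / k.factorial

lemma bcoef_succ (k : ℕ) : bcoef c (k + 1) = c (k + 1) / (k + 1).factorial :=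
  if_neg (Nat.succ_ne_zero k)

variable {c}
variable (hconv : ∀ x : ℝ, |x| < R →
      Summable fun k : ℕ => |c (k + 1)| / (k + 1).factorial * |x| ^ (k + 1))

include hconv

lemma summable_abs_bcoef {y : ℝ} (hy : |y| < R) :
    Summable (fun k : ℕ => |bcoef c k * y ^ k|) := by
  have s1 := hconv y hy
  have s2 : Summable (fun k : ℕ => |bcoef c (k + 1) * y ^ (k + 1)|) := by
    apply s1.congr
    intro k
    rw [abs_mul, abs_pow, bcoef_succ, abs_div, Nat.abs_cast]
  exact (summable_nat_add_iff 1).mp s2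

lemma gser_hasSum {y : ℝ} (hy : |y| < R) :
    HasSum (fun k : ℕ => bcoef c k * y ^ k) (Gser c y) := by
  have s3 : Summable (fun k : ℕ => bcoef c k * y ^ k) :=
    (summable_abs_bcoef hconv hy).of_abs
  have h0 : Gser c y = ∑' k, bcoef c k * y ^ k := by
    rw [Summable.tsum_eq_zero_add s3]
    simp only [bcoef, Nat.succ_ne_zero, if_true, if_false, reduceIte, zero_mul, zero_add, Gser]
  rw [h0]
  exact s3.hasSum

lemma gser_hasFPowerSeries (hR : 0 < R) :
    HasFPowerSeriesOnBall (Gser c) (FormalMultilinearSeries.ofScalars ℝ (bcoef c)) 0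
      (ENNReal.ofReal R) := by
  constructor
  · apply ENNReal.le_of_forall_nnreal_lt
    intro r hr
    rw [← ENNReal.ofReal_coe_nnreal] at hr
    have hrR : (r : ℝ) < R := (ENNReal.ofReal_lt_ofReal_iff_of_nonneg r.coe_nonneg).mp hr
    apply FormalMultilinearSeries.le_radius_of_summable_norm
    have s0 : Summable (fun k : ℕ => |bcoef c k * (r : ℝ) ^ k|) :=
      summable_abs_bcoef hconv (by rwa [abs_of_nonneg r.coe_nonneg])
    apply s0.congr
    intro k
    rw [abs_mul, abs_pow, FormalMultilinearSeries.ofScalars_norm, Real.norm_eq_abs,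
      abs_of_nonneg r.coe_nonneg]
  · exact ENNReal.ofReal_pos.2 hR
  · intro y hy
    rw [EMetric.mem_ball, edist_dist, Real.dist_eq, sub_zero] at hy
    have hy' : |y| < R := by
      by_contra h
      exact absurd hy (not_lt.2 (ENNReal.ofReal_le_ofReal (not_lt.1 h)))
    rw [zero_add]
    have h := gser_hasSum hconv hy'
    have hfun : (fun n => FormalMultilinearSeries.ofScalars ℝ (bcoef c) n fun _ => y) =
        fun n => bcoef c n * y ^ n := by
      funext n
      rw [FormalMultilinearSeries.ofScalars_apply_eq, smul_eq_mul]
    rw [hfun]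
    exact h

lemma gser_analyticAt (hR : 0 < R) {x₀ : ℝ} (hx₀ : |x₀| < R) : AnalyticAt ℝ (Gser c) x₀ := by
  apply (gser_hasFPowerSeries hconv hR).analyticAt_of_mem
  rw [EMetric.mem_ball, edist_dist, Real.dist_eq, sub_zero]
  exact (ENNReal.ofReal_lt_ofReal_iff hR).2 hx₀

end Stmt3Aux

end
open Stmt3Aux

/-- Let `d, n ≥ 1`, `p, T, ε > 0`, `|ξ| = 1`, `a₀` Schwartz, `β` smooth,
`G` converging absolutely for `|x| < R`, and assume `ε^{2p} sup_x |a₀(x)|² < R`. Then the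
amplitude `a` is `C¹` on `ℝ × ℝ^d`, satisfies `a(0,·) = a₀`, and solves the transport
equation `i∂_t a − i ε^{1−2n} ξ·∇_x a − ε^{−2n} β(ε^{−1}x − Tξ) G(ε^{2p}|a|²) a = 0`. -/
theorem stmt3 (d n : ℕ) (hd : 1 ≤ d) (hn : 1 ≤ n) (p T ε : ℝ)
    (hp : 0 < p) (hT : 0 < T) (hε : 0 < ε)
    (ξ : EuclideanSpace ℝ (Fin d)) (hξ : ‖ξ‖ = 1)
    (a₀ : SchwartzMap (EuclideanSpace ℝ (Fin d)) ℂ)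
    (β : EuclideanSpace ℝ (Fin d) → ℝ) (hβ : ContDiff ℝ (⊤ : ℕ∞) β)
    (c : ℕ → ℝ) (R : ℝ) (hR : 0 < R)
    (hconv : ∀ x : ℝ, |x| < R →
      Summable fun k : ℕ => |c (k + 1)| / (k + 1).factorial * |x| ^ (k + 1))
    (hsmall : (⨆ x : EuclideanSpace ℝ (Fin d), ε ^ (2 * p) * ‖a₀ x‖ ^ 2) < R) :
    ContDiff ℝ 1 (fun q : ℝ × EuclideanSpace ℝ (Fin d) => aFun d n p T ξ a₀ β c ε q.1 q.2) ∧
      (∀ x, aFun d n p T ξ a₀ β c ε 0 x = a₀ x) ∧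
      ∀ (t : ℝ) (x : EuclideanSpace ℝ (Fin d)),
        Complex.I * deriv (fun τ : ℝ => aFun d n p T ξ a₀ β c ε τ x) t -
          Complex.I * Complex.ofReal (ε ^ ((1 : ℝ) - 2 * (n : ℝ))) *
            (∑ j : Fin d, Complex.ofReal (ξ j) * pderiv' j (aFun d n p T ξ a₀ β c ε t) x) -
          Complex.ofReal (ε ^ (-(2 * (n : ℝ)))) * Complex.ofReal (β (ε⁻¹ • x - T • ξ)) *
            Complex.ofReal (Gser c (ε ^ (2 * p) * ‖aFun d n p T ξ a₀ β c ε t x‖ ^ 2)) *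
            aFun d n p T ξ a₀ β c ε t x = 0 := by
  classical
  set ε' : ℝ := ε ^ ((1 : ℝ) - 2 * (n : ℝ)) with hε'def
  set εκ : ℝ := ε ^ (-(2 * (n : ℝ))) with hεκdef
  set εp : ℝ := ε ^ (2 * p) with hεpdef
  have hε'pos : 0 < ε' := Real.rpow_pos_of_pos hε _
  have hεκpos : 0 < εκ := Real.rpow_pos_of_pos hε _
  have hεppos : 0 < εp := Real.rpow_pos_of_pos hε _
  set v : EuclideanSpace ℝ (Fin d) := εκ • ξ with hvdef
  set h : EuclideanSpace ℝ (Fin d) → ℝ := fun y => Gser c (εp * ‖a₀ y‖ ^ 2) with hhdef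
  set CC : ℂ := -Complex.I * (εκ : ℂ) with hCCdef
  set aF : ℝ × EuclideanSpace ℝ (Fin d) → ℂ := fun q =>
    a₀ (q.2 + (ε' * q.1) • ξ) *
      Complex.exp (CC * ((h (q.2 + (ε' * q.1) • ξ) : ℝ) : ℂ) *
        ((Phi β v (q.1, ε⁻¹ • q.2 - T • ξ) : ℝ) : ℂ)) with haFdef
  -- rewrite of the integral
  have hint : ∀ (t : ℝ) (x : EuclideanSpace ℝ (Fin d)),
      (∫ s in (0:ℝ)..t, β (ε⁻¹ • x + (εκ * (t - s)) • ξ - T • ξ))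
        = Phi β v (t, ε⁻¹ • x - T • ξ) := by
    intro t x
    rw [phi_eq]
    have hfun : ∀ s : ℝ, ε⁻¹ • x + (εκ * (t - s)) • ξ - T • ξ
        = (ε⁻¹ • x - T • ξ) + (t - s) • v := by
      intro s
      rw [hvdef, smul_smul, mul_comm, add_sub_right_comm]
    calc (∫ s in (0:ℝ)..t, β (ε⁻¹ • x + (εκ * (t - s)) • ξ - T • ξ))
        = ∫ s in (0:ℝ)..t,
            (fun u : ℝ => β ((ε⁻¹ • x - T • ξ) + u • v)) (t - s) := by
          apply intervalIntegral.integral_congr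
          intro s _
          simp only [hfun s]
      _ = ∫ u in (t - t)..(t - 0), β ((ε⁻¹ • x - T • ξ) + u • v) :=
          intervalIntegral.integral_comp_sub_left
            (fun u : ℝ => β ((ε⁻¹ • x - T • ξ) + u • v)) t
      _ = _ := by rw [sub_self, sub_zero]
  have haFeq : ∀ (t : ℝ) (x : EuclideanSpace ℝ (Fin d)),
      aFun d n p T ξ a₀ β c ε t x = aF (t, x) := by
    intro t x
    rw [aFun, haFdef]
    simp only [← hε'def, ← hεκdef, ← hεpdef, ← hhdef, hint t x]
    rfl
  have haFeq' : (fun q : ℝ × EuclideanSpace ℝ (Fin d) => aFun d n p T ξ a₀ β c ε q.1 q.2)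
      = aF := by
    funext q
    rw [haFeq q.1 q.2]
  -- boundedness of the argument of Gser
  have hsup : ∀ y : EuclideanSpace ℝ (Fin d), |εp * ‖a₀ y‖ ^ 2| < R := by
    intro y
    have h0 : 0 ≤ εp * ‖a₀ y‖ ^ 2 := mul_nonneg hεppos.le (sq_nonneg _)
    rw [abs_of_nonneg h0]
    refine lt_of_le_of_lt ?_ hsmall
    apply le_ciSup (f := fun x : EuclideanSpace ℝ (Fin d) => εp * ‖a₀ x‖ ^ 2) ?_ y
    refine ⟨εp * ((SchwartzMap.seminorm ℝ 0 0) a₀) ^ 2, ?_⟩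
    rintro _ ⟨w, rfl⟩
    have h1 : ‖a₀ w‖ ≤ (SchwartzMap.seminorm ℝ 0 0) a₀ := SchwartzMap.norm_le_seminorm ℝ a₀ w
    exact mul_le_mul_of_nonneg_left (pow_le_pow_left₀ (norm_nonneg _) h1 2) hεppos.le
  have hGan : ∀ y : EuclideanSpace ℝ (Fin d), AnalyticAt ℝ (Gser c) (εp * ‖a₀ y‖ ^ 2) :=
    fun y => gser_analyticAt hconv hR (hsup y)
  -- smoothness of N
  have hnormsq : ContDiff ℝ (⊤ : ℕ∞) (fun w : ℂ => ‖w‖ ^ 2) := by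
    have hfun : (fun w : ℂ => ‖w‖ ^ 2) = fun w : ℂ => w.re * w.re + w.im * w.im := by
      funext w
      rw [Complex.sq_norm, Complex.normSq_apply]
    rw [hfun]
    exact (Complex.reCLM.contDiff.mul Complex.reCLM.contDiff).add
      (Complex.imCLM.contDiff.mul Complex.imCLM.contDiff)
  have hN : ContDiff ℝ (⊤ : ℕ∞) (fun y : EuclideanSpace ℝ (Fin d) => εp * ‖a₀ y‖ ^ 2) :=
    contDiff_const.mul (hnormsq.comp (a₀.smooth ⊤))
  have hhdiffAt : ∀ y, DifferentiableAt ℝ h y := by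
    intro y
    exact ((hGan y).differentiableAt).comp y
      ((hN.differentiable (by simp)) y)
  have hhcontAt : ∀ y, ContDiffAt ℝ 1 h y := by
    intro y
    exact ((hGan y).contDiffAt).comp y (hN.contDiffAt.of_le (m := 1) (mod_cast le_top))
  -- the Y map
  have cY : ContDiff ℝ (⊤ : ℕ∞)
      (fun q : ℝ × EuclideanSpace ℝ (Fin d) => q.2 + (ε' * q.1) • ξ) :=
    contDiff_snd.add ((contDiff_const.mul contDiff_fst).smul contDiff_const)
  -- Part 1 : C¹ regularity
  have hC1 : ContDiff ℝ 1 aF := by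
    rw [contDiff_iff_contDiffAt]
    intro q
    have ca : ContDiffAt ℝ 1 (fun q : ℝ × EuclideanSpace ℝ (Fin d) =>
        (a₀ (q.2 + (ε' * q.1) • ξ) : ℂ)) q :=
      ((a₀.smooth ⊤).of_le (mod_cast le_top)).comp (cY.of_le (mod_cast le_top)) |>.contDiffAt
    have cg : ContDiffAt ℝ 1 (fun q : ℝ × EuclideanSpace ℝ (Fin d) =>
        h (q.2 + (ε' * q.1) • ξ)) q :=
      (hhcontAt (q.2 + (ε' * q.1) • ξ)).comp q (cY.of_le (mod_cast le_top)).contDiffAt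
    have cΦ : ContDiffAt ℝ 1 (fun q : ℝ × EuclideanSpace ℝ (Fin d) =>
        Phi β v (q.1, ε⁻¹ • q.2 - T • ξ)) q := by
      apply (phi_contDiff hβ).contDiffAt.comp q
      exact ((contDiff_fst (𝕜 := ℝ)).prodMk (((contDiff_const (c := ε⁻¹)).smul contDiff_snd).sub (contDiff_const (c := T • ξ)))).contDiffAt
    rw [haFdef]
    apply ContDiffAt.mul ca
    have cexp1 : ContDiffAt ℝ 1 Complex.exp
        (CC * ((h (q.2 + (ε' * q.1) • ξ) : ℝ) : ℂ) *
          ((Phi β v (q.1, ε⁻¹ • q.2 - T • ξ) : ℝ) : ℂ)) :=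
      (Complex.contDiff_exp (𝕜 := ℝ)).contDiffAt
    apply ContDiffAt.comp q cexp1
    apply ContDiffAt.mul
    · exact contDiffAt_const.mul ((Complex.ofRealCLM.contDiff.contDiffAt).comp q cg)
    · exact (Complex.ofRealCLM.contDiff.contDiffAt).comp q cΦ
  refine ⟨by rw [haFeq']; exact hC1, ?_, ?_⟩
  · -- Part 2 : initial data
    intro x
    rw [aFun]
    simp [intervalIntegral.integral_same]
  · -- Part 3 : the transport equation
    intro t x
    set y : EuclideanSpace ℝ (Fin d) := x + (ε' * t) • ξ with hydef
    set z : EuclideanSpace ℝ (Fin d) := ε⁻¹ • x - T • ξ with hzdef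
    have hA : HasFDerivAt (⇑a₀) (fderiv ℝ (⇑a₀) y) y :=
      (((a₀.smooth ⊤).differentiable (by simp)) y).hasFDerivAt
    have hDh : HasFDerivAt h (fderiv ℝ h y) y := (hhdiffAt y).hasFDerivAt
    set A := fderiv ℝ (⇑a₀) y with hAdef
    set Dh := fderiv ℝ h y with hDhdef
    -- derivative in t
    have hγ : HasDerivAt (fun τ : ℝ => x + (ε' * τ) • ξ) (ε' • ξ) t := by
      have := (((hasDerivAt_id t).const_mul ε').smul_const ξ).const_add x
      simpa using this
    have hu1 : HasDerivAt (fun τ : ℝ => (a₀ (x + (ε' * τ) • ξ) : ℂ)) (A (ε' • ξ)) t :=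
      hA.comp_hasDerivAt t hγ
    have hg1 : HasDerivAt (fun τ : ℝ => h (x + (ε' * τ) • ξ)) (Dh (ε' • ξ)) t :=
      by have := hDh.comp_hasDerivAt t hγ; exact this
    have hΦ1 : HasDerivAt (fun τ : ℝ => Phi β v (τ, z)) (β (z + t • v)) t :=
      phi_hasDerivAt_fst hβ t z
    have hexp1 := (hg1.ofReal_comp.const_mul CC).mul hΦ1.ofReal_comp
    have hDt : HasDerivAt (fun τ : ℝ => aF (τ, x))
        ((A (ε' • ξ)) * Complex.exp (CC * ((h y : ℝ) : ℂ) * ((Phi β v (t, z) : ℝ) : ℂ)) +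
          (a₀ y : ℂ) *
            (Complex.exp (CC * ((h y : ℝ) : ℂ) * ((Phi β v (t, z) : ℝ) : ℂ)) *
              (CC * ((Dh (ε' • ξ) : ℝ) : ℂ) * ((Phi β v (t, z) : ℝ) : ℂ) +
                CC * ((h y : ℝ) : ℂ) * ((β (z + t • v) : ℝ) : ℂ)))) t := by
      exact hu1.mul hexp1.cexp
    -- derivative along the line x + r ξ
    have hx0 : x + (0:ℝ) • ξ = x := by rw [zero_smul, add_zero]
    have hy0 : x + (0:ℝ) • ξ + (ε' * t) • ξ = y := by rw [zero_smul, add_zero]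
    have hδ : HasDerivAt (fun r : ℝ => x + r • ξ + (ε' * t) • ξ) ξ 0 := by
      have := ((((hasDerivAt_id (0:ℝ)).smul_const ξ).const_add x)).add_const ((ε' * t) • ξ)
      simpa using this
    have hA' : HasFDerivAt (⇑a₀) A (x + (0:ℝ) • ξ + (ε' * t) • ξ) := by rw [hy0]; exact hA
    have hDh' : HasFDerivAt h Dh (x + (0:ℝ) • ξ + (ε' * t) • ξ) := by rw [hy0]; exact hDh
    have hu2 : HasDerivAt (fun r : ℝ => (a₀ (x + r • ξ + (ε' * t) • ξ) : ℂ)) (A ξ) 0 :=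
      hA'.comp_hasDerivAt 0 hδ
    have hg2 : HasDerivAt (fun r : ℝ => h (x + r • ξ + (ε' * t) • ξ)) (Dh ξ) 0 :=
      by have := hDh'.comp_hasDerivAt 0 hδ; exact this
    have hΦ2 : HasDerivAt (fun r : ℝ => Phi β v (t, ε⁻¹ • (x + r • ξ) - T • ξ))
        ((β (z + t • v) - β z) * (ε⁻¹ * εκ⁻¹)) 0 := by
      have hline := phi_hasDerivAt_line (v := v) hβ t z
      have inner : HasDerivAt (fun r : ℝ => (ε⁻¹ * εκ⁻¹) * r) (ε⁻¹ * εκ⁻¹) 0 := by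
        simpa using (hasDerivAt_id (0:ℝ)).const_mul (ε⁻¹ * εκ⁻¹)
      have hline' : HasDerivAt (fun ρ : ℝ => Phi β v (t, z + ρ • v))
          (β (z + t • v) - β z) ((ε⁻¹ * εκ⁻¹) * 0) := by
        rw [mul_zero]; exact hline
      have hcomp := hline'.comp 0 inner
      have hfuneq : (fun r : ℝ => Phi β v (t, ε⁻¹ • (x + r • ξ) - T • ξ))
          = (fun ρ : ℝ => Phi β v (t, z + ρ • v)) ∘ (fun r : ℝ => (ε⁻¹ * εκ⁻¹) * r) := by
        funext r
        show Phi β v (t, ε⁻¹ • (x + r • ξ) - T • ξ) = Phi β v (t, z + ((ε⁻¹ * εκ⁻¹) * r) • v)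
        congr 2
        rw [hzdef, hvdef, smul_add, smul_smul, add_sub_right_comm, smul_smul]
        congr 1
        rw [show ε⁻¹ * εκ⁻¹ * r * εκ = ε⁻¹ * r * (εκ⁻¹ * εκ) from by ring,
          inv_mul_cancel₀ hεκpos.ne', mul_one]
      rw [hfuneq]
      exact hcomp
    have hexp2 := (hg2.ofReal_comp.const_mul CC).mul hΦ2.ofReal_comp
    have hLine : HasDerivAt (fun r : ℝ => aF (t, x + r • ξ))
        ((A ξ) * Complex.exp (CC * ((h (x + (0:ℝ) • ξ + (ε' * t) • ξ) : ℝ) : ℂ) *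
            ((Phi β v (t, ε⁻¹ • (x + (0:ℝ) • ξ) - T • ξ) : ℝ) : ℂ)) +
          (a₀ (x + (0:ℝ) • ξ + (ε' * t) • ξ) : ℂ) *
            (Complex.exp (CC * ((h (x + (0:ℝ) • ξ + (ε' * t) • ξ) : ℝ) : ℂ) *
              ((Phi β v (t, ε⁻¹ • (x + (0:ℝ) • ξ) - T • ξ) : ℝ) : ℂ)) *
              (CC * ((Dh ξ : ℝ) : ℂ) *
                  ((Phi β v (t, ε⁻¹ • (x + (0:ℝ) • ξ) - T • ξ) : ℝ) : ℂ) +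
                CC * ((h (x + (0:ℝ) • ξ + (ε' * t) • ξ) : ℝ) : ℂ) *
                  (((β (z + t • v) - β z) * (ε⁻¹ * εκ⁻¹) : ℝ) : ℂ)))) 0 := by
      exact hu2.mul hexp2.cexp
    rw [hy0, hx0] at hLine
    have hzx : ε⁻¹ • x - T • ξ = z := rfl
    rw [hzx] at hLine
    -- the full space derivative
    have hdx : DifferentiableAt ℝ (fun x' => aF (t, x')) x := by
      have h1 : DifferentiableAt ℝ aF (t, x) := (hC1.differentiable one_ne_zero) (t, x)
      exact h1.comp x ((differentiableAt_const t).prodMk differentiableAt_id)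
    set L := fderiv ℝ (fun x' => aF (t, x')) x with hLdef
    have hLF : HasFDerivAt (fun x' => aF (t, x')) L x := hdx.hasFDerivAt
    have hline2 : HasDerivAt (fun r : ℝ => x + r • ξ) ξ 0 := by
      have := (((hasDerivAt_id (0:ℝ)).smul_const ξ).const_add x)
      simpa using this
    have hLF' : HasFDerivAt (fun x' => aF (t, x')) L (x + (0:ℝ) • ξ) := by rw [hx0]; exact hLF
    have hLξ : HasDerivAt (fun r : ℝ => aF (t, x + r • ξ)) (L ξ) 0 :=
      by have := hLF'.comp_hasDerivAt 0 hline2; exact this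
    have hLval := hLξ.unique hLine
    -- the sum over partial derivatives
    have hsum : (∑ j : Fin d, ((ξ j : ℝ) : ℂ) * pderiv' j (fun x' => aF (t, x')) x) = L ξ := by
      have hterm : ∀ j : Fin d, ((ξ j : ℝ) : ℂ) * pderiv' j (fun x' => aF (t, x')) x
          = L ((ξ j) • EuclideanSpace.single j (1:ℝ)) := by
        intro j
        simp only [pderiv']
        rw [← hLdef, L.map_smul, Complex.real_smul]
      rw [Finset.sum_congr rfl fun j _ => hterm j, ← _root_.map_sum]
      congr 1
      ext i
      rw [WithLp.ofLp_sum, Finset.sum_apply]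
      simp [EuclideanSpace.single_apply]
    -- norm of aF
    have hre : (CC * ((h y : ℝ) : ℂ) * ((Phi β v (t, z) : ℝ) : ℂ)).re = 0 := by
      rw [hCCdef]
      simp [Complex.mul_re, Complex.mul_im]
    have hnorm : ‖aF (t, x)‖ = ‖a₀ y‖ := by
      have : aF (t, x) = (a₀ y : ℂ) *
          Complex.exp (CC * ((h y : ℝ) : ℂ) * ((Phi β v (t, z) : ℝ) : ℂ)) := rfl
      rw [this, norm_mul, Complex.norm_exp, hre,
        Real.exp_zero, mul_one]
    -- assemble
    have hgoal1 : (fun τ : ℝ => aFun d n p T ξ a₀ β c ε τ x) = fun τ => aF (τ, x) :=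
      funext fun τ => haFeq τ x
    have hgoal2 : aFun d n p T ξ a₀ β c ε t = fun x' => aF (t, x') :=
      funext fun x' => haFeq t x'
    rw [hgoal1, haFeq t x, hgoal2]
    rw [hDt.deriv, hsum, hLval, hnorm]
    have hGh : Gser c (εp * ‖a₀ y‖ ^ 2) = h y := rfl
    rw [hGh]
    have hmain : aF (t, x) = (a₀ y : ℂ) *
        Complex.exp (CC * ((h y : ℝ) : ℂ) * ((Phi β v (t, z) : ℝ) : ℂ)) := rfl
    rw [hmain]
    have hβz : β (ε⁻¹ • x - T • ξ) = β z := rfl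
    rw [hβz]
    -- final algebra
    have hAs : A (ε' • ξ) = (ε' : ℂ) * A ξ := by
      rw [A.map_smul, Complex.real_smul]
    have hDhs : Dh (ε' • ξ) = ε' * Dh ξ := by
      rw [Dh.map_smul, smul_eq_mul]
    rw [hAs, hDhs]
    have hqv : (ε' : ℝ) * (ε⁻¹ * εκ⁻¹) = 1 := by
      have h1 : εκ⁻¹ = ε ^ (2 * (n:ℝ)) := by
        rw [hεκdef, Real.rpow_neg hε.le, inv_inv]
      have h2 : ε⁻¹ = ε ^ (-1 : ℝ) := (Real.rpow_neg_one ε).symm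
      rw [hε'def, h1, h2, ← Real.rpow_add hε, ← Real.rpow_add hε]
      norm_num
    have hqvC : (ε' : ℂ) * ((ε⁻¹ * εκ⁻¹ : ℝ) : ℂ) = 1 := by
      rw [← Complex.ofReal_mul, ← Complex.ofReal_one]
      exact_mod_cast congrArg Complex.ofReal hqv
    rw [hCCdef]
    push_cast
    push_cast at hqvC
    set e : ℂ := Complex.exp (-Complex.I * (εκ : ℂ) * ((h y : ℝ) : ℂ) *
      ((Phi β v (t, z) : ℝ) : ℂ)) with hedef
    linear_combination
      ((εκ : ℂ) * ((h y : ℝ) : ℂ) * (a₀ y : ℂ) * e *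
          ((ε' : ℂ) * (((ε : ℝ) : ℂ)⁻¹ * ((εκ : ℝ) : ℂ)⁻¹) *
              (((β (z + t • v) : ℝ) : ℂ) - ((β z : ℝ) : ℂ)) -
            ((β (z + t • v) : ℝ) : ℂ))) * Complex.I_mul_I +
        (-((εκ : ℂ) * ((h y : ℝ) : ℂ) * (a₀ y : ℂ) * e *
          (((β (z + t • v) : ℝ) : ℂ) - ((β z : ℝ) : ℂ)))) * hqvC
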